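/- Let p be a positive integer and let G_p be the group presented by two generators s, φ subject to the relations φ^p = e and the commutation relations [φ^i s φ^{-i}, φ^j s φ^{-j}] = e for all 0 ≤ i, j ≤ p − 1. Then for all integers n, m, if φ^n · (s φ) · φ^m = s φ holds in G_p, then p divides n and p divides m. -/

import Mathlib

open scoped commutatorElement

/-- The relators of the group `G_p` generated by `s` (the generator `0`) and `φ`
(the generator `1`) subject to `φ^p = e` and the commutation of the conjugates
`φ^i s φ^{-i}` for `0 ≤ i, j ≤ p - 1`. -/
def gpRels (p : ℕ) : Set (FreeGroup (Fin 2)) :=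
  {FreeGroup.of (1 : Fin 2) ^ p} ∪
    ⋃ (i : Fin p) (j : Fin p),
      {⁅FreeGroup.of (1 : Fin 2) ^ (i : ℕ) * FreeGroup.of (0 : Fin 2) *
          (FreeGroup.of (1 : Fin 2) ^ (i : ℕ))⁻¹,
        FreeGroup.of (1 : Fin 2) ^ (j : ℕ) * FreeGroup.of (0 : Fin 2) *
          (FreeGroup.of (1 : Fin 2) ^ (j : ℕ))⁻¹⁆}

/-- the abelian "lamp" group -/
abbrev GpN (p : ℕ) : Type := ZMod p → Multiplicative ℤ

/-- shift by `a` as a multiplicative automorphism of `GpN p` -/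
def gpShiftAut (p : ℕ) (a : ZMod p) : GpN p ≃* GpN p where
  toFun f := fun x => f (x - a)
  invFun f := fun x => f (x + a)
  left_inv f := by funext x; simp
  right_inv f := by funext x; simp
  map_mul' f g := rfl

/-- the shift action of `ZMod p` on `GpN p` -/
def gpShift (p : ℕ) : Multiplicative (ZMod p) →* MulAut (GpN p) where
  toFun a := gpShiftAut p (Multiplicative.toAdd a)
  map_one' := by
    apply MulEquiv.ext; intro f; funext x
    simp [gpShiftAut]
  map_mul' a b := by
    apply MulEquiv.ext; intro f; funext x
    show f (x - (Multiplicative.toAdd a + Multiplicative.toAdd b)) =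
      f (x - Multiplicative.toAdd a - Multiplicative.toAdd b)
    rw [sub_sub]

lemma gpShift_mulSingle (p : ℕ) (a : ZMod p) (c : ZMod p) (v : Multiplicative ℤ) :
    gpShift p (Multiplicative.ofAdd a) (Pi.mulSingle c v) = Pi.mulSingle (c + a) v := by
  funext x
  simp only [gpShift, gpShiftAut, MonoidHom.coe_mk, OneHom.coe_mk, MulEquiv.coe_mk,
    Equiv.coe_fn_mk, toAdd_ofAdd]
  simp [Pi.mulSingle_apply, sub_eq_iff_eq_add]

/-- the concrete model `ℤ^p ⋊ ZMod p` -/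
abbrev GpModel (p : ℕ) : Type := GpN p ⋊[gpShift p] Multiplicative (ZMod p)

open SemidirectProduct in
/-- the generators' images -/
def gpGen (p : ℕ) : Fin 2 → GpModel p :=
  ![inl (Pi.mulSingle 0 (Multiplicative.ofAdd 1)),
    inr (Multiplicative.ofAdd (1 : ZMod p))]

open SemidirectProduct in
lemma gpGen_pow (p : ℕ) (k : ℕ) :
    gpGen p 1 ^ k = inr (Multiplicative.ofAdd (k : ZMod p)) := by
  have : gpGen p 1 = inr (Multiplicative.ofAdd (1 : ZMod p)) := rfl
  rw [this, ← map_pow]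
  congr 1
  rw [← ofAdd_nsmul]
  simp

open SemidirectProduct in
lemma gpGen_zpow (p : ℕ) (k : ℤ) :
    gpGen p 1 ^ k = inr (Multiplicative.ofAdd (k : ZMod p)) := by
  have : gpGen p 1 = inr (Multiplicative.ofAdd (1 : ZMod p)) := rfl
  rw [this, ← map_zpow]
  congr 1
  rw [← ofAdd_zsmul]
  simp

open SemidirectProduct in
lemma gpGen_conj (p : ℕ) (k : ℕ) :
    FreeGroup.lift (gpGen p)
      (FreeGroup.of (1 : Fin 2) ^ k * FreeGroup.of (0 : Fin 2) *
        (FreeGroup.of (1 : Fin 2) ^ k)⁻¹) =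
      inl (Pi.mulSingle ((k : ZMod p)) (Multiplicative.ofAdd 1)) := by
  simp only [map_mul, map_inv, map_pow, FreeGroup.lift_apply_of]
  rw [gpGen_pow]
  have : gpGen p 0 = inl (Pi.mulSingle (0 : ZMod p) (Multiplicative.ofAdd 1)) := rfl
  rw [this, ← map_inv, ← inl_aut, gpShift_mulSingle, zero_add]

open SemidirectProduct in
lemma gpRels_hold (p : ℕ) :
    ∀ r ∈ gpRels p, FreeGroup.lift (gpGen p) r = 1 := by
  intro r hr
  rcases hr with hr | hr
  · rcases hr with rfl
    rw [map_pow]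
    have : FreeGroup.lift (gpGen p) (FreeGroup.of (1 : Fin 2)) = gpGen p 1 := by simp
    rw [this, gpGen_pow]
    simp
  · simp only [Set.mem_iUnion, Set.mem_singleton_iff] at hr
    obtain ⟨i, j, rfl⟩ := hr
    rw [map_commutatorElement, gpGen_conj, gpGen_conj]
    exact commutatorElement_eq_one_iff_commute.mpr ((Commute.all _ _).map inl)

open SemidirectProduct in
/-- In the presented group `G_p` (generators `s = of 0`, `φ = of 1`,
relations `φ^p = e` and `[φ^i s φ^{-i}, φ^j s φ^{-j}] = e` for `0 ≤ i, j ≤ p - 1`),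
if `φ^n * (s * φ) * φ^m = s * φ` for integers `n, m`, then `p ∣ n` and `p ∣ m`. -/
theorem gp_conjugation_relation (p : ℕ) (hp : 0 < p) (n m : ℤ)
    (h : (PresentedGroup.of (rels := gpRels p) (1 : Fin 2)) ^ n *
          (PresentedGroup.of (0 : Fin 2) * PresentedGroup.of (1 : Fin 2)) *
          (PresentedGroup.of (rels := gpRels p) (1 : Fin 2)) ^ m =
        PresentedGroup.of (0 : Fin 2) * PresentedGroup.of (1 : Fin 2)) :
    (p : ℤ) ∣ n ∧ (p : ℤ) ∣ m := by
  haveI : NeZero p := ⟨hp.ne'⟩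
  have H := congrArg (PresentedGroup.toGroup (gpRels_hold p)) h
  simp only [map_mul, map_zpow, PresentedGroup.toGroup.of] at H
  rw [gpGen_zpow, gpGen_zpow] at H
  have hs : gpGen p 0 = inl (Pi.mulSingle (0 : ZMod p) (Multiplicative.ofAdd 1)) := rfl
  have hφ : gpGen p 1 = inr (Multiplicative.ofAdd (1 : ZMod p)) := rfl
  rw [hs, hφ] at H
  -- right components
  have hright := congrArg SemidirectProduct.right H
  simp only [mul_right, right_inl, right_inr, one_mul, mul_one] at hright
  -- left components
  have hleft := congrArg SemidirectProduct.left H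
  simp only [mul_left, left_inl, left_inr, right_inl, right_inr, map_one, mul_right, one_mul, mul_one, map_one, MulAut.one_apply] at hleft
  rw [show ((gpShift p) (Multiplicative.ofAdd ((n : ZMod p))))
        (Pi.mulSingle (0 : ZMod p) (Multiplicative.ofAdd (1 : ℤ))) =
      Pi.mulSingle ((n : ZMod p)) (Multiplicative.ofAdd (1 : ℤ)) from by
    rw [gpShift_mulSingle, zero_add]] at hleft
  have hn : (n : ZMod p) = 0 := by
    by_contra hne
    have := congrFun hleft (n : ZMod p)
    simp only [Pi.mulSingle_apply, if_pos rfl] at this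
    rw [if_neg hne] at this
    exact absurd this (by decide)
  have hnm : (n : ZMod p) + 1 + (m : ZMod p) = 1 := by
    have := congrArg Multiplicative.toAdd hright
    simpa using this
  have hm : (m : ZMod p) = 0 := by
    rw [hn] at hnm
    linear_combination hnm
  exact ⟨(ZMod.intCast_zmod_eq_zero_iff_dvd n p).mp hn,
    (ZMod.intCast_zmod_eq_zero_iff_dvd m p).mp hm⟩
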